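/- arXiv:2411.03963 — 5 statements merged into one kernel-verified Lean document; each statement's English description precedes it below -/
import Mathlib

section
/- Let U and Y be complex Hilbert spaces, L : U → Y a bounded linear operator, α > 0, Λ := α·I_U + L*L (bijective with bounded inverse), and let S : Y → Y be a bounded linear operator that is isometric: ‖Sx‖ = ‖x‖ for all x ∈ Y. Define P := S* ∘ (I_Y − L Λ⁻¹ L*) ∘ S. Then Re⟨P x, x⟩ ≥ (1 + α⁻¹‖L‖²)⁻² ‖x‖² for every x ∈ Y, and P is bijective with bounded inverse. -/
open ContinuousLinearMap

set_option maxHeartbeats 1000000 in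
/-- With `Λ = α·I + L*L` (with bounded inverse `Λinv`), an isometric
bounded operator `S` on `Y`, and `P = S* (I − L Λ⁻¹ L*) S`, one has the coercivity
estimate `Re⟪Px, x⟫ ≥ (1 + α⁻¹‖L‖²)⁻² ‖x‖²` for every `x ∈ Y`, and `P` is bijective
with bounded inverse. -/
theorem stmt13
    {U Y : Type*}
    [NormedAddCommGroup U] [InnerProductSpace ℂ U] [CompleteSpace U]
    [NormedAddCommGroup Y] [InnerProductSpace ℂ Y] [CompleteSpace Y]
    (L : U →L[ℂ] Y) (α : ℝ) (hα : 0 < α)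
    (Λ Λinv : U →L[ℂ] U)
    (hΛ : Λ = (α : ℂ) • (1 : U →L[ℂ] U) + (ContinuousLinearMap.adjoint L).comp L)
    (hinv₁ : Λinv.comp Λ = 1) (hinv₂ : Λ.comp Λinv = 1)
    (S : Y →L[ℂ] Y) (hS : ∀ x : Y, ‖S x‖ = ‖x‖)
    (P : Y →L[ℂ] Y)
    (hP : P = ((ContinuousLinearMap.adjoint S).comp
      (((1 : Y →L[ℂ] Y) -
        L.comp (Λinv.comp (ContinuousLinearMap.adjoint L))))).comp S) :
    (∀ x : Y, ((1 + α⁻¹ * ‖L‖ ^ 2) ^ 2)⁻¹ * ‖x‖ ^ 2 ≤ (inner ℂ (P x) x : ℂ).re) ∧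
    ∃ Pinv : Y →L[ℂ] Y, Pinv.comp P = 1 ∧ P.comp Pinv = 1 := by
  have h0 : (0:ℝ) ≤ α⁻¹ * ‖L‖ ^ 2 := by positivity
  set c : ℝ := 1 + α⁻¹ * ‖L‖ ^ 2 with hc
  have hc1 : (1:ℝ) ≤ c := by rw [hc]; linarith
  have hc0 : (0:ℝ) < c := lt_of_lt_of_le one_pos hc1
  set M : Y →L[ℂ] Y := (1 : Y →L[ℂ] Y) -
    L.comp (Λinv.comp (ContinuousLinearMap.adjoint L)) with hM
  -- key estimate for  M
  have key : ∀ y : Y, ‖y‖ ≤ c * ‖M y‖ ∧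
      (‖M y‖ : ℝ) ^ 2 ≤ (inner ℂ (M y) y : ℂ).re := by
    intro y
    set u : U := Λinv ((ContinuousLinearMap.adjoint L) y) with hu
    have hΛu : Λ u = (ContinuousLinearMap.adjoint L) y := by
      have := congrArg (fun T : U →L[ℂ] U => T ((ContinuousLinearMap.adjoint L) y)) hinv₂
      simpa [comp_apply] using this
    have hMy : M y = y - L u := by
      simp [hM, comp_apply, hu, sub_apply]
    have hLM : (ContinuousLinearMap.adjoint L) (M y) = (α : ℂ) • u := by
      rw [hMy, map_sub, ← hΛu, hΛ]
      simp [add_apply, comp_apply, smul_apply]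
    -- bound on u
    have hnormu : α * ‖u‖ ≤ ‖L‖ * ‖M y‖ := by
      have h1 : ‖(ContinuousLinearMap.adjoint L) (M y)‖ ≤ ‖L‖ * ‖M y‖ := by
        calc ‖(ContinuousLinearMap.adjoint L) (M y)‖
            ≤ ‖ContinuousLinearMap.adjoint L‖ * ‖M y‖ := le_opNorm _ _
          _ = ‖L‖ * ‖M y‖ := by rw [ContinuousLinearMap.adjoint.norm_map L]
      have h2 : ‖(α : ℂ) • u‖ = α * ‖u‖ := by
        rw [norm_smul]
        simp [abs_of_pos hα]
      rw [hLM, h2] at h1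
      exact h1
    have hainv : α * α⁻¹ = 1 := mul_inv_cancel₀ hα.ne'
    have huM : ‖u‖ ≤ α⁻¹ * (‖L‖ * ‖M y‖) := by
      have hainv0 : (0:ℝ) < α⁻¹ := inv_pos.mpr hα
      calc ‖u‖ = α⁻¹ * (α * ‖u‖) := by field_simp
        _ ≤ α⁻¹ * (‖L‖ * ‖M y‖) := mul_le_mul_of_nonneg_left hnormu hainv0.le
    have hy : y = M y + L u := by rw [hMy]; abel
    constructor
    · -- ‖y‖ ≤ c ‖M y‖
      calc ‖y‖ = ‖M y + L u‖ := by rw [← hy]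
        _ ≤ ‖M y‖ + ‖L u‖ := norm_add_le _ _
        _ ≤ ‖M y‖ + ‖L‖ * ‖u‖ := by
            have := L.le_opNorm u; linarith
        _ ≤ ‖M y‖ + ‖L‖ * (α⁻¹ * (‖L‖ * ‖M y‖)) := by
            have hL0 : (0:ℝ) ≤ ‖L‖ := norm_nonneg _
            nlinarith
        _ = c * ‖M y‖ := by rw [hc]; ring
    · -- coercivity of M
      have hsplit : (inner ℂ (M y) y : ℂ) = inner ℂ (M y) (M y) + inner ℂ (M y) (L u) := by
        calc (inner ℂ (M y) y : ℂ) = inner ℂ (M y) (M y + L u) := by rw [← hy]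
          _ = inner ℂ (M y) (M y) + inner ℂ (M y) (L u) := inner_add_right _ _ _
      have hterm : (inner ℂ (M y) (L u) : ℂ) = ((α * ‖u‖ ^ 2 : ℝ) : ℂ) := by
        rw [← ContinuousLinearMap.adjoint_inner_left, hLM, inner_smul_left,
          inner_self_eq_norm_sq_to_K]
        simp [Complex.conj_ofReal]
      have hre : (inner ℂ (M y) y : ℂ).re = ‖M y‖ ^ 2 + α * ‖u‖ ^ 2 := by
        rw [hsplit, Complex.add_re, hterm, Complex.ofReal_re,
          inner_self_eq_norm_sq_to_K]
        norm_cast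
      rw [hre]
      nlinarith [norm_nonneg u, sq_nonneg ‖u‖]
  -- coercivity of P
  have coP : ∀ x : Y, (c ^ 2)⁻¹ * ‖x‖ ^ 2 ≤ (inner ℂ (P x) x : ℂ).re := by
    intro x
    have hPx : (inner ℂ (P x) x : ℂ) = inner ℂ (M (S x)) (S x) := by
      rw [hP]
      simp only [comp_apply]
      rw [ContinuousLinearMap.adjoint_inner_left]
    obtain ⟨h1, h2⟩ := key (S x)
    rw [hS x] at h1
    have hMx : (c ^ 2)⁻¹ * ‖x‖ ^ 2 ≤ ‖M (S x)‖ ^ 2 := by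
      have hsq : ‖x‖ ^ 2 ≤ c ^ 2 * ‖M (S x)‖ ^ 2 := by
        nlinarith [norm_nonneg x, norm_nonneg (M (S x))]
      have hc2 : (0:ℝ) < c ^ 2 := by positivity
      rw [inv_mul_le_iff₀ hc2]
      linarith
    rw [hPx]
    exact hMx.trans h2
  refine ⟨coP, ?_⟩
  -- antilipschitz bound : ‖x‖ ≤ c^2 * ‖P x‖
  have hbound : ∀ x : Y, ‖x‖ ≤ c ^ 2 * ‖P x‖ := by
    intro x
    rcases eq_or_ne x 0 with rfl | hx
    · simp
    · have hxpos : (0:ℝ) < ‖x‖ := norm_pos_iff.mpr hx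
      have h1 := coP x
      have h2 : (inner ℂ (P x) x : ℂ).re ≤ ‖P x‖ * ‖x‖ := by
        simpa using re_inner_le_norm (𝕜 := ℂ) (P x) x
      have hc2 : (0:ℝ) < c ^ 2 := by positivity
      have hkey : (c ^ 2)⁻¹ * ‖x‖ ^ 2 ≤ ‖P x‖ * ‖x‖ := h1.trans h2
      rw [inv_mul_le_iff₀ hc2] at hkey
      have : ‖x‖ * ‖x‖ ≤ c ^ 2 * ‖P x‖ * ‖x‖ := by
        calc ‖x‖ * ‖x‖ = ‖x‖ ^ 2 := by ring
          _ ≤ c ^ 2 * (‖P x‖ * ‖x‖) := hkey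
          _ = c ^ 2 * ‖P x‖ * ‖x‖ := by ring
      exact le_of_mul_le_mul_right this hxpos
  have hanti : AntilipschitzWith (⟨c ^ 2, by positivity⟩ : NNReal) P :=
    P.antilipschitz_of_bound (fun x => hbound x)
  have hker : P.ker = ⊥ :=
    LinearMap.ker_eq_bot.mpr hanti.injective
  have hclosed : IsClosed (P.range : Set Y) :=
    hanti.isClosed_range P.uniformContinuous
  haveI : CompleteSpace (P.range : Submodule ℂ Y) :=
    hclosed.completeSpace_coe
  have hrange : P.range = ⊤ := by
    rw [← Submodule.orthogonal_eq_bot_iff]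
    rw [Submodule.eq_bot_iff]
    intro y hy
    have hyP : (inner ℂ (P y) y : ℂ) = 0 :=
      (Submodule.mem_orthogonal _ y).mp hy (P y) (LinearMap.mem_range_self _ y)
    have h1 := coP y
    rw [hyP] at h1
    simp only [Complex.zero_re] at h1
    have hc2 : (0:ℝ) < (c ^ 2)⁻¹ := by positivity
    have hy0 : ‖y‖ = 0 := by
      by_contra h
      have hpos : (0:ℝ) < ‖y‖ := (norm_nonneg y).lt_of_ne (Ne.symm h)
      have : (0:ℝ) < (c ^ 2)⁻¹ * ‖y‖ ^ 2 := by positivity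
      linarith
    exact norm_eq_zero.mp hy0
  let e := ContinuousLinearEquiv.ofBijective P hker hrange
  refine ⟨(e.symm : Y →L[ℂ] Y), ?_, ?_⟩
  · ext x
    simp only [comp_apply, ContinuousLinearEquiv.coe_coe, one_apply]
    exact ContinuousLinearEquiv.ofBijective_symm_apply_apply P hker hrange x
  · ext x
    simp only [comp_apply, ContinuousLinearEquiv.coe_coe, one_apply]
    exact ContinuousLinearEquiv.ofBijective_apply_symm_apply P hker hrange x
end

section
/- Let U and Y be complex Hilbert spaces, L : U → Y a bounded linear operator, α > 0, and G, G_n : Y → Y (n ∈ ℕ) bounded linear operators such that G_n y → G y and G_n* y → G* y in Y for every y ∈ Y as n → ∞. Set Λ_n := α·I_U + L*G_n*G_n L and Λ_G := α·I_U + L*G*G L (each bijective with bounded inverse, with ‖Λ_n⁻¹‖ ≤ 1/α). Then for every h ∈ U one has Λ_n⁻¹ h → Λ_G⁻¹ h in U as n → ∞. -/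
open ContinuousLinearMap Filter Topology

/-- If `G_n → G` and `G_n* → G*` strongly on `Y`, and
`Λ_n = α·I + L*G_n*G_nL`, `Λ_G = α·I + L*G*GL` have bounded inverses with
`‖Λ_n⁻¹‖ ≤ 1/α`, then `Λ_n⁻¹ h → Λ_G⁻¹ h` for every `h ∈ U`. -/
theorem stmt14
    {U Y : Type*}
    [NormedAddCommGroup U] [InnerProductSpace ℂ U] [CompleteSpace U]
    [NormedAddCommGroup Y] [InnerProductSpace ℂ Y] [CompleteSpace Y]
    (L : U →L[ℂ] Y) (α : ℝ) (hα : 0 < α)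
    (G : Y →L[ℂ] Y) (Gn : ℕ → (Y →L[ℂ] Y))
    (hGn : ∀ y : Y, Tendsto (fun n => Gn n y) atTop (𝓝 (G y)))
    (hGnstar : ∀ y : Y, Tendsto
      (fun n => (ContinuousLinearMap.adjoint (Gn n)) y) atTop
      (𝓝 ((ContinuousLinearMap.adjoint G) y)))
    (Λn : ℕ → (U →L[ℂ] U)) (ΛG : U →L[ℂ] U)
    (hΛn : ∀ n : ℕ, Λn n = (α : ℂ) • (1 : U →L[ℂ] U) +
      ((ContinuousLinearMap.adjoint L).comp
        ((ContinuousLinearMap.adjoint (Gn n)).comp ((Gn n).comp L))))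
    (hΛG : ΛG = (α : ℂ) • (1 : U →L[ℂ] U) +
      ((ContinuousLinearMap.adjoint L).comp
        ((ContinuousLinearMap.adjoint G).comp (G.comp L))))
    (Λninv : ℕ → (U →L[ℂ] U)) (ΛGinv : U →L[ℂ] U)
    (hninv₁ : ∀ n : ℕ, (Λninv n).comp (Λn n) = 1)
    (hninv₂ : ∀ n : ℕ, (Λn n).comp (Λninv n) = 1)
    (hninvbd : ∀ n : ℕ, ‖Λninv n‖ ≤ 1 / α)
    (hGinv₁ : ΛGinv.comp ΛG = 1) (hGinv₂ : ΛG.comp ΛGinv = 1)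
    (hGinvbd : ‖ΛGinv‖ ≤ 1 / α) :
    ∀ h : U, Tendsto (fun n => (Λninv n) h) atTop (𝓝 (ΛGinv h)) := by
  intro h
  set u := ΛGinv h with hu
  have hΛGu : ΛG u = h := by
    have := congrArg (fun T : U →L[ℂ] U => T h) hGinv₂
    simpa using this
  set y := L u with hy
  -- uniform bound on adjoints
  obtain ⟨C, hC⟩ : ∃ C, ∀ n, ‖ContinuousLinearMap.adjoint (Gn n)‖ ≤ C := by
    apply banach_steinhaus
    intro x
    obtain ⟨M, hM⟩ := ((hGnstar x).norm).bddAbove_range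
    exact ⟨M, fun n => hM ⟨n, rfl⟩⟩
  have hC0 : 0 ≤ C := le_trans (norm_nonneg _) (hC 0)
  -- key strong convergence of Gn* Gn y
  have key : Tendsto (fun n => (ContinuousLinearMap.adjoint (Gn n)) (Gn n y)) atTop
      (𝓝 ((ContinuousLinearMap.adjoint G) (G y))) := by
    rw [tendsto_iff_norm_sub_tendsto_zero]
    have h1 : Tendsto (fun n => C * ‖Gn n y - G y‖ +
        ‖(ContinuousLinearMap.adjoint (Gn n)) (G y) - (ContinuousLinearMap.adjoint G) (G y)‖)
        atTop (𝓝 0) := by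
      have t1 : Tendsto (fun n => ‖Gn n y - G y‖) atTop (𝓝 0) :=
        tendsto_iff_norm_sub_tendsto_zero.mp (hGn y)
      have t2 : Tendsto (fun n => ‖(ContinuousLinearMap.adjoint (Gn n)) (G y) -
          (ContinuousLinearMap.adjoint G) (G y)‖) atTop (𝓝 0) :=
        tendsto_iff_norm_sub_tendsto_zero.mp (hGnstar (G y))
      simpa using (t1.const_mul C).add t2
    refine squeeze_zero (fun n => norm_nonneg _) (fun n => ?_) h1
    have hdecomp : (ContinuousLinearMap.adjoint (Gn n)) (Gn n y) -
        (ContinuousLinearMap.adjoint G) (G y) =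
        (ContinuousLinearMap.adjoint (Gn n)) (Gn n y - G y) +
        ((ContinuousLinearMap.adjoint (Gn n)) (G y) -
          (ContinuousLinearMap.adjoint G) (G y)) := by
      simp [map_sub]
    rw [hdecomp]
    refine le_trans (norm_add_le _ _) (add_le_add_left ?_ _)
    calc ‖(ContinuousLinearMap.adjoint (Gn n)) (Gn n y - G y)‖
        ≤ ‖ContinuousLinearMap.adjoint (Gn n)‖ * ‖Gn n y - G y‖ := le_opNorm _ _
      _ ≤ C * ‖Gn n y - G y‖ := by
          exact mul_le_mul_of_nonneg_right (hC n) (norm_nonneg _)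
  -- convergence of Λn u to h
  have hΛnu : Tendsto (fun n => Λn n u) atTop (𝓝 h) := by
    have := (((ContinuousLinearMap.adjoint L).continuous.tendsto _).comp key).const_add
      ((α : ℂ) • u)
    have heq : (fun n => Λn n u) = fun n => (α : ℂ) • u +
        (ContinuousLinearMap.adjoint L) ((ContinuousLinearMap.adjoint (Gn n)) (Gn n (L u))) := by
      funext n; rw [hΛn n]; simp
    rw [heq]
    have hlim : (α : ℂ) • u +
        (ContinuousLinearMap.adjoint L) ((ContinuousLinearMap.adjoint G) (G (L u))) = h := by
      rw [← hΛGu, hΛG]; simp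
    rw [← hlim]
    exact this
  -- conclude via squeeze
  rw [tendsto_iff_norm_sub_tendsto_zero]
  have hrep : ∀ n, Λninv n h - u = Λninv n (h - Λn n u) := by
    intro n
    have : Λninv n (Λn n u) = u := by
      have := congrArg (fun T : U →L[ℂ] U => T u) (hninv₁ n)
      simpa using this
    rw [map_sub, this]
  have h2 : Tendsto (fun n => (1 / α) * ‖h - Λn n u‖) atTop (𝓝 0) := by
    have := tendsto_iff_norm_sub_tendsto_zero.mp hΛnu
    have := this.const_mul (1 / α)
    simpa [norm_sub_rev] using this
  refine squeeze_zero (fun n => norm_nonneg _) (fun n => ?_) h2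
  rw [hrep n]
  calc ‖Λninv n (h - Λn n u)‖ ≤ ‖Λninv n‖ * ‖h - Λn n u‖ := le_opNorm _ _
    _ ≤ (1 / α) * ‖h - Λn n u‖ :=
        mul_le_mul_of_nonneg_right (hninvbd n) (norm_nonneg _)
end

section
/- Let U and Y be complex Hilbert spaces, L : U → Y a bounded linear operator, α > 0, v ∈ Y, and G, G_n : Y → Y (n ∈ ℕ) bounded linear operators such that G_n y → G y and G_n* y → G* y in Y for every y ∈ Y as n → ∞. With Λ_n := α·I_U + L*G_n*G_n L, Λ_G := α·I_U + L*G*G L, ĝ_n := −Λ_n⁻¹(L*G_n*G_n v), and ĝ := −Λ_G⁻¹(L*G*G v), one has ĝ_n → ĝ in U as n → ∞. -/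
open ContinuousLinearMap Filter Topology

lemma aux_strong_prod {Y : Type*}
    [NormedAddCommGroup Y] [InnerProductSpace ℂ Y] [CompleteSpace Y]
    (G : Y →L[ℂ] Y) (Gn : ℕ → (Y →L[ℂ] Y))
    (hGn : ∀ y : Y, Tendsto (fun n => Gn n y) atTop (𝓝 (G y)))
    (hGnstar : ∀ y : Y, Tendsto (fun n => (adjoint (Gn n)) y) atTop (𝓝 ((adjoint G) y)))
    (y : Y) :
    Tendsto (fun n => (adjoint (Gn n)) ((Gn n) y)) atTop (𝓝 ((adjoint G) (G y))) := by
  obtain ⟨C, hC⟩ := banach_steinhaus (g := Gn) (fun x =>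
    ⟨_, fun n => le_csSup ((hGn x).norm.bddAbove_range) (Set.mem_range_self n)⟩)
  have h1 : Tendsto (fun n => (adjoint (Gn n)) ((Gn n) y - G y)) atTop (𝓝 0) := by
    apply squeeze_zero_norm (a := fun n => C * ‖(Gn n) y - G y‖)
    · intro n
      calc ‖(adjoint (Gn n)) ((Gn n) y - G y)‖
          ≤ ‖adjoint (Gn n)‖ * ‖(Gn n) y - G y‖ := (adjoint (Gn n)).le_opNorm _
        _ ≤ C * ‖(Gn n) y - G y‖ := by
            have : ‖adjoint (Gn n)‖ = ‖Gn n‖ :=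
              LinearIsometryEquiv.norm_map ContinuousLinearMap.adjoint (Gn n)
            rw [this]
            exact mul_le_mul_of_nonneg_right (hC n) (norm_nonneg _)
    · have h0 : Tendsto (fun n => (Gn n) y - G y) atTop (𝓝 0) :=
        tendsto_sub_nhds_zero_iff.mpr (hGn y)
      simpa using h0.norm.const_mul C
  have h2 := h1.add (hGnstar (G y))
  simp only [zero_add] at h2
  convert h2 using 2 with n
  simp [map_sub]

lemma aux_inv_bound {U Y : Type*}
    [NormedAddCommGroup U] [InnerProductSpace ℂ U] [CompleteSpace U]
    [NormedAddCommGroup Y] [InnerProductSpace ℂ Y] [CompleteSpace Y]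
    (L : U →L[ℂ] Y) {α : ℝ} (hα : 0 < α) (Gn : Y →L[ℂ] Y) (Λ Λinv : U →L[ℂ] U)
    (hΛ : Λ = (α : ℂ) • (1 : U →L[ℂ] U) +
      ((adjoint L).comp ((adjoint Gn).comp (Gn.comp L))))
    (hinv : Λ.comp Λinv = 1) (w : U) : ‖Λinv w‖ ≤ α⁻¹ * ‖w‖ := by
  set u := Λinv w with hu
  have hw : Λ u = w := by
    have := congrArg (fun T : U →L[ℂ] U => T w) hinv
    simpa using this
  have hre : RCLike.re (inner ℂ (Λ u) u) = α * ‖u‖ ^ 2 + ‖Gn (L u)‖ ^ 2 := by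
    rw [hΛ]
    simp only [ContinuousLinearMap.add_apply, ContinuousLinearMap.smul_apply,
      ContinuousLinearMap.one_apply, ContinuousLinearMap.comp_apply, inner_add_left,
      inner_smul_left, adjoint_inner_left]
    rw [inner_self_eq_norm_sq_to_K (𝕜 := ℂ), inner_self_eq_norm_sq_to_K (𝕜 := ℂ)]
    simp [RCLike.conj_ofReal, ← RCLike.ofReal_pow, ← RCLike.ofReal_mul]
    norm_cast
  have hge : α * ‖u‖ ^ 2 ≤ ‖w‖ * ‖u‖ := by
    have h1 : α * ‖u‖ ^ 2 ≤ RCLike.re (inner ℂ (Λ u) u) := by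
      rw [hre]; nlinarith [sq_nonneg ‖Gn (L u)‖]
    have h2 : RCLike.re (inner ℂ (Λ u) u) ≤ ‖Λ u‖ * ‖u‖ := re_inner_le_norm _ _
    rw [hw] at h1 h2
    linarith
  rw [le_inv_mul_iff₀ hα]
  rcases eq_or_lt_of_le (norm_nonneg u) with h | h
  · rw [← h]; simpa using norm_nonneg w
  · have := le_of_mul_le_mul_right (by nlinarith : (α * ‖u‖) * ‖u‖ ≤ ‖w‖ * ‖u‖) h
    exact this



open ContinuousLinearMap Filter Topology

/-- If `G_n → G` and `G_n* → G*` strongly on `Y`, then the optimal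
controls `ghat_n = −Λ_n⁻¹(L*G_n*G_n v)` converge in `U` to `ghat = −Λ_G⁻¹(L*G*G v)`,
where `Λ_n = α·I + L*G_n*G_nL` and `Λ_G = α·I + L*G*GL`. -/
theorem stmt15
    {U Y : Type*}
    [NormedAddCommGroup U] [InnerProductSpace ℂ U] [CompleteSpace U]
    [NormedAddCommGroup Y] [InnerProductSpace ℂ Y] [CompleteSpace Y]
    (L : U →L[ℂ] Y) (α : ℝ) (hα : 0 < α) (v : Y)
    (G : Y →L[ℂ] Y) (Gn : ℕ → (Y →L[ℂ] Y))
    (hGn : ∀ y : Y, Tendsto (fun n => Gn n y) atTop (𝓝 (G y)))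
    (hGnstar : ∀ y : Y, Tendsto
      (fun n => (ContinuousLinearMap.adjoint (Gn n)) y) atTop
      (𝓝 ((ContinuousLinearMap.adjoint G) y)))
    (Λn : ℕ → (U →L[ℂ] U)) (ΛG : U →L[ℂ] U)
    (hΛn : ∀ n : ℕ, Λn n = (α : ℂ) • (1 : U →L[ℂ] U) +
      ((ContinuousLinearMap.adjoint L).comp
        ((ContinuousLinearMap.adjoint (Gn n)).comp ((Gn n).comp L))))
    (hΛG : ΛG = (α : ℂ) • (1 : U →L[ℂ] U) +
      ((ContinuousLinearMap.adjoint L).comp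
        ((ContinuousLinearMap.adjoint G).comp (G.comp L))))
    (Λninv : ℕ → (U →L[ℂ] U)) (ΛGinv : U →L[ℂ] U)
    (hninv₁ : ∀ n : ℕ, (Λninv n).comp (Λn n) = 1)
    (hninv₂ : ∀ n : ℕ, (Λn n).comp (Λninv n) = 1)
    (hGinv₁ : ΛGinv.comp ΛG = 1) (hGinv₂ : ΛG.comp ΛGinv = 1)
    (ghatn : ℕ → U) (ghat : U)
    (hghatn : ∀ n : ℕ, ghatn n = -(Λninv n) ((ContinuousLinearMap.adjoint L)
      ((ContinuousLinearMap.adjoint (Gn n)) ((Gn n) v))))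
    (hghat : ghat = -ΛGinv ((ContinuousLinearMap.adjoint L)
      ((ContinuousLinearMap.adjoint G) (G v)))) :
    Tendsto ghatn atTop (𝓝 ghat) := by
  set b : ℕ → U := fun n => (adjoint L) ((adjoint (Gn n)) ((Gn n) v)) with hb_def
  set bL : U := (adjoint L) ((adjoint G) (G v)) with hbL_def
  have hb : Tendsto b atTop (𝓝 bL) :=
    ((adjoint L).continuous.tendsto _).comp (aux_strong_prod G Gn hGn hGnstar v)
  have hbd : ∀ n w, ‖Λninv n w‖ ≤ α⁻¹ * ‖w‖ := fun n w =>
    aux_inv_bound L hα (Gn n) (Λn n) (Λninv n) (hΛn n) (hninv₂ n) w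
  set u0 : U := ΛGinv bL with hu0
  have hc : Tendsto (fun n => (ΛG - Λn n) u0) atTop (𝓝 0) := by
    have heq : ∀ n, (ΛG - Λn n) u0 =
        (adjoint L) ((adjoint G) (G (L u0))) -
        (adjoint L) ((adjoint (Gn n)) ((Gn n) (L u0))) := by
      intro n
      simp [hΛG, hΛn n, ContinuousLinearMap.sub_apply, ContinuousLinearMap.add_apply]
    have h0 : Tendsto (fun n => (adjoint L) ((adjoint (Gn n)) ((Gn n) (L u0))))
        atTop (𝓝 ((adjoint L) ((adjoint G) (G (L u0))))) :=
      ((adjoint L).continuous.tendsto _).comp (aux_strong_prod G Gn hGn hGnstar (L u0))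
    have := (tendsto_const_nhds (x := (adjoint L) ((adjoint G) (G (L u0))))).sub h0
    simp only [sub_self] at this
    simpa [heq] using this
  have key : ∀ n, ghatn n - ghat =
      -(Λninv n (b n - bL)) - (Λninv n ((ΛG - Λn n) u0)) := by
    intro n
    have e1 : ΛG u0 = bL := by
      have := congrArg (fun T : U →L[ℂ] U => T bL) hGinv₂
      simpa using this
    have e2 : Λninv n (Λn n u0) = u0 := by
      have := congrArg (fun T : U →L[ℂ] U => T u0) (hninv₁ n)
      simpa using this
    rw [hghatn n, hghat]
    rw [ContinuousLinearMap.sub_apply, map_sub, map_sub, e2, e1]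
    rw [hu0]
    abel
  apply tendsto_sub_nhds_zero_iff.mp
  apply squeeze_zero_norm
    (a := fun n => α⁻¹ * ‖b n - bL‖ + α⁻¹ * ‖(ΛG - Λn n) u0‖)
  · intro n
    rw [key n]
    calc ‖-(Λninv n (b n - bL)) - (Λninv n ((ΛG - Λn n) u0))‖
        ≤ ‖-(Λninv n (b n - bL))‖ + ‖Λninv n ((ΛG - Λn n) u0)‖ := norm_sub_le _ _
      _ = ‖Λninv n (b n - bL)‖ + ‖Λninv n ((ΛG - Λn n) u0)‖ := by rw [norm_neg]
      _ ≤ α⁻¹ * ‖b n - bL‖ + α⁻¹ * ‖(ΛG - Λn n) u0‖ :=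
          add_le_add (hbd n _) (hbd n _)
  · have h1 : Tendsto (fun n => b n - bL) atTop (𝓝 0) :=
      tendsto_sub_nhds_zero_iff.mpr hb
    have := (h1.norm.const_mul α⁻¹).add (hc.norm.const_mul α⁻¹)
    simpa using this
end

section
/- Let U and Y be complex Hilbert spaces, L : U → Y a bounded linear operator, α > 0, v ∈ Y, and G, G_n : Y → Y (n ∈ ℕ) bounded linear operators such that G_n y → G y and G_n* y → G* y in Y for every y ∈ Y as n → ∞. With ĝ_n := −(α·I_U + L*G_n*G_n L)⁻¹(L*G_n*G_n v) and ĝ := −(α·I_U + L*G*G L)⁻¹(L*G*G v), the optimal final states converge: v + L ĝ_n → v + L ĝ in Y as n → ∞. -/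
open ContinuousLinearMap Filter Topology

private lemma coercive_bound {U Y : Type*}
    [NormedAddCommGroup U] [InnerProductSpace ℂ U] [CompleteSpace U]
    [NormedAddCommGroup Y] [InnerProductSpace ℂ Y] [CompleteSpace Y]
    (L : U →L[ℂ] Y) (α : ℝ)
    (A : Y →L[ℂ] Y) (T : U →L[ℂ] U)
    (hT : T = (α : ℂ) • (1 : U →L[ℂ] U) +
      ((ContinuousLinearMap.adjoint L).comp
        ((ContinuousLinearMap.adjoint A).comp (A.comp L))))
    (g : U) : α * ‖g‖ ≤ ‖T g‖ := by
  rcases eq_or_ne g 0 with rfl | hg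
  · simp
  have hre : (inner ℂ (T g) g).re = α * ‖g‖ ^ 2 + ‖A (L g)‖ ^ 2 := by
    rw [hT]
    simp only [ContinuousLinearMap.add_apply, ContinuousLinearMap.smul_apply,
      ContinuousLinearMap.one_apply, ContinuousLinearMap.coe_comp', Function.comp_apply,
      inner_add_left, inner_smul_left, ContinuousLinearMap.adjoint_inner_left,
      inner_self_eq_norm_sq_to_K]
    simp [← Complex.ofReal_pow]
  have h1 : α * ‖g‖ * ‖g‖ ≤ ‖T g‖ * ‖g‖ := by
    have h2 : (inner ℂ (T g) g).re ≤ ‖(inner ℂ (T g) g)‖ := by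
      simpa using Complex.re_le_norm (inner ℂ (T g) g)
    have h3 := norm_inner_le_norm (𝕜 := ℂ) (T g) g
    nlinarith [sq_nonneg (‖A (L g)‖), norm_nonneg g, sq_abs (‖g‖)]
  exact le_of_mul_le_mul_right h1 (norm_pos_iff.mpr hg)

set_option maxHeartbeats 1000000 in
/-- If `G_n → G` and `G_n* → G*` strongly on `Y`, then the optimal
final states converge: `v + L ghat_n → v + L ghat` in `Y`, where
`ghat_n = −(α·I + L*G_n*G_nL)⁻¹(L*G_n*G_n v)` and `ghat = −(α·I + L*G*GL)⁻¹(L*G*G v)`. -/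
theorem stmt16
    {U Y : Type*}
    [NormedAddCommGroup U] [InnerProductSpace ℂ U] [CompleteSpace U]
    [NormedAddCommGroup Y] [InnerProductSpace ℂ Y] [CompleteSpace Y]
    (L : U →L[ℂ] Y) (α : ℝ) (hα : 0 < α) (v : Y)
    (G : Y →L[ℂ] Y) (Gn : ℕ → (Y →L[ℂ] Y))
    (hGn : ∀ y : Y, Tendsto (fun n => Gn n y) atTop (𝓝 (G y)))
    (hGnstar : ∀ y : Y, Tendsto
      (fun n => (ContinuousLinearMap.adjoint (Gn n)) y) atTop
      (𝓝 ((ContinuousLinearMap.adjoint G) y)))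
    (Λn : ℕ → (U →L[ℂ] U)) (ΛG : U →L[ℂ] U)
    (hΛn : ∀ n : ℕ, Λn n = (α : ℂ) • (1 : U →L[ℂ] U) +
      ((ContinuousLinearMap.adjoint L).comp
        ((ContinuousLinearMap.adjoint (Gn n)).comp ((Gn n).comp L))))
    (hΛG : ΛG = (α : ℂ) • (1 : U →L[ℂ] U) +
      ((ContinuousLinearMap.adjoint L).comp
        ((ContinuousLinearMap.adjoint G).comp (G.comp L))))
    (Λninv : ℕ → (U →L[ℂ] U)) (ΛGinv : U →L[ℂ] U)
    (hninv₁ : ∀ n : ℕ, (Λninv n).comp (Λn n) = 1)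
    (hninv₂ : ∀ n : ℕ, (Λn n).comp (Λninv n) = 1)
    (hGinv₁ : ΛGinv.comp ΛG = 1) (hGinv₂ : ΛG.comp ΛGinv = 1)
    (ghatn : ℕ → U) (ghat : U)
    (hghatn : ∀ n : ℕ, ghatn n = -(Λninv n) ((ContinuousLinearMap.adjoint L)
      ((ContinuousLinearMap.adjoint (Gn n)) ((Gn n) v))))
    (hghat : ghat = -ΛGinv ((ContinuousLinearMap.adjoint L)
      ((ContinuousLinearMap.adjoint G) (G v)))) :
    Tendsto (fun n => v + L (ghatn n)) atTop (𝓝 (v + L ghat)) := by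
  -- uniform bound on adjoints
  obtain ⟨C, hC⟩ : ∃ C, ∀ n, ‖ContinuousLinearMap.adjoint (Gn n)‖ ≤ C := by
    apply banach_steinhaus
    intro y
    obtain ⟨M, hM⟩ := (hGnstar y).norm.bddAbove_range
    exact ⟨M, fun n => hM ⟨n, rfl⟩⟩
  have hC0 : 0 ≤ C := le_trans (norm_nonneg _) (hC 0)
  -- strong convergence of Gn* ∘ Gn
  have hcomp : ∀ y : Y, Tendsto
      (fun n => (ContinuousLinearMap.adjoint (Gn n)) (Gn n y)) atTop
      (𝓝 ((ContinuousLinearMap.adjoint G) (G y))) := by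
    intro y
    rw [tendsto_iff_norm_sub_tendsto_zero]
    have h1 : Tendsto (fun n => ‖Gn n y - G y‖) atTop (𝓝 0) :=
      tendsto_iff_norm_sub_tendsto_zero.mp (hGn y)
    have h2 : Tendsto (fun n =>
        ‖(ContinuousLinearMap.adjoint (Gn n)) (G y)
          - (ContinuousLinearMap.adjoint G) (G y)‖) atTop (𝓝 0) :=
      tendsto_iff_norm_sub_tendsto_zero.mp (hGnstar (G y))
    have hlim : Tendsto (fun n => C * ‖Gn n y - G y‖ +
        ‖(ContinuousLinearMap.adjoint (Gn n)) (G y)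
          - (ContinuousLinearMap.adjoint G) (G y)‖) atTop (𝓝 0) := by
      have := (h1.const_mul C).add h2
      simpa using this
    refine squeeze_zero (fun n => norm_nonneg _) (fun n => ?_) hlim
    have key : (ContinuousLinearMap.adjoint (Gn n)) (Gn n y)
        - (ContinuousLinearMap.adjoint G) (G y)
        = (ContinuousLinearMap.adjoint (Gn n)) (Gn n y - G y)
          + ((ContinuousLinearMap.adjoint (Gn n)) (G y)
            - (ContinuousLinearMap.adjoint G) (G y)) := by
      rw [map_sub]; abel
    rw [key]
    refine le_trans (norm_add_le _ _) (add_le_add_left ?_ _)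
    calc ‖(ContinuousLinearMap.adjoint (Gn n)) (Gn n y - G y)‖
        ≤ ‖ContinuousLinearMap.adjoint (Gn n)‖ * ‖Gn n y - G y‖ := le_opNorm _ _
      _ ≤ C * ‖Gn n y - G y‖ := by
          exact mul_le_mul_of_nonneg_right (hC n) (norm_nonneg _)
  -- pointwise convergence of Λn to ΛG
  have hΛpt : ∀ u : U, Tendsto (fun n => Λn n u) atTop (𝓝 (ΛG u)) := by
    intro u
    have h1 := ((ContinuousLinearMap.adjoint L).continuous.tendsto _).comp (hcomp (L u))
    have h2 := h1.const_add ((α : ℂ) • u)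
    have e1 : (fun n => Λn n u) = fun n => (α : ℂ) • u +
        (ContinuousLinearMap.adjoint L)
          ((ContinuousLinearMap.adjoint (Gn n)) (Gn n (L u))) := by
      funext n; rw [hΛn n]; rfl
    have e2 : ΛG u = (α : ℂ) • u +
        (ContinuousLinearMap.adjoint L)
          ((ContinuousLinearMap.adjoint G) (G (L u))) := by
      rw [hΛG]; rfl
    rw [e1, e2]
    exact h2
  -- convergence of right-hand sides
  set wn : ℕ → U := fun n => (ContinuousLinearMap.adjoint L)
    ((ContinuousLinearMap.adjoint (Gn n)) (Gn n v)) with hwn_def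
  set w : U := (ContinuousLinearMap.adjoint L)
    ((ContinuousLinearMap.adjoint G) (G v)) with hw_def
  have hwn : Tendsto wn atTop (𝓝 w) :=
    ((ContinuousLinearMap.adjoint L).continuous.tendsto _).comp (hcomp v)
  -- uniform bound on inverses
  have hinvb : ∀ (n : ℕ) (x : U), ‖Λninv n x‖ ≤ α⁻¹ * ‖x‖ := by
    intro n x
    have hx : Λn n (Λninv n x) = x := by
      have := congrArg (fun T : U →L[ℂ] U => T x) (hninv₂ n)
      simpa using this
    have := coercive_bound L α (Gn n) (Λn n) (hΛn n) (Λninv n x)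
    rw [hx] at this
    rw [inv_mul_eq_div, le_div_iff₀ hα]
    linarith
  -- convergence of ghatn to ghat
  set u0 : U := ΛGinv w with hu0
  have hgh : Tendsto ghatn atTop (𝓝 ghat) := by
    rw [tendsto_iff_norm_sub_tendsto_zero]
    have h1 : Tendsto (fun n => ‖wn n - w‖) atTop (𝓝 0) :=
      tendsto_iff_norm_sub_tendsto_zero.mp hwn
    have h2 : Tendsto (fun n => ‖ΛG u0 - Λn n u0‖) atTop (𝓝 0) := by
      have := tendsto_iff_norm_sub_tendsto_zero.mp (hΛpt u0)
      simpa [norm_sub_rev] using this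
    have hlim : Tendsto (fun n => α⁻¹ * ‖wn n - w‖ + α⁻¹ * ‖ΛG u0 - Λn n u0‖)
        atTop (𝓝 0) := by
      have := (h1.const_mul α⁻¹).add (h2.const_mul α⁻¹)
      simpa using this
    refine squeeze_zero (fun n => norm_nonneg _) (fun n => ?_) hlim
    have e : ghatn n - ghat = -(Λninv n (wn n - w)) - (Λninv n w - ΛGinv w) := by
      rw [hghatn n, hghat, map_sub]
      abel
    have key2 : Λninv n w - ΛGinv w = Λninv n (ΛG u0 - Λn n u0) := by
      have hA : ΛG u0 = w := by
        have := congrArg (fun T : U →L[ℂ] U => T w) hGinv₂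
        simpa [hu0] using this
      have hB : Λninv n (Λn n u0) = u0 := by
        have := congrArg (fun T : U →L[ℂ] U => T u0) (hninv₁ n)
        simpa using this
      rw [map_sub, hA, hB, hu0]
    rw [e, key2]
    calc ‖-(Λninv n (wn n - w)) - Λninv n (ΛG u0 - Λn n u0)‖
        ≤ ‖Λninv n (wn n - w)‖ + ‖Λninv n (ΛG u0 - Λn n u0)‖ := by
          have hn : -(Λninv n (wn n - w)) - Λninv n (ΛG u0 - Λn n u0)
              = -((Λninv n (wn n - w)) + Λninv n (ΛG u0 - Λn n u0)) := by abel
          rw [hn, norm_neg]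
          exact norm_add_le _ _
      _ ≤ α⁻¹ * ‖wn n - w‖ + α⁻¹ * ‖ΛG u0 - Λn n u0‖ :=
          add_le_add (hinvb _ _) (hinvb _ _)
  exact Tendsto.const_add v ((L.continuous.tendsto ghat).comp hgh)
end

section
/- Let U and Y be complex Hilbert spaces, L : U → Y a bounded linear operator, α > 0, v ∈ Y, and G, G_n : Y → Y (n ∈ ℕ) bounded linear operators such that G_n y → G y and G_n* y → G* y in Y for every y ∈ Y as n → ∞. With ĝ_n := −(α·I_U + L*G_n*G_n L)⁻¹(L*G_n*G_n v) and ĝ := −(α·I_U + L*G*G L)⁻¹(L*G*G v), the optimal values converge: α‖ĝ_n‖² + ‖G_n(v + L ĝ_n)‖² → α‖ĝ‖² + ‖G(v + L ĝ)‖² in ℝ as n → ∞. -/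
open ContinuousLinearMap Filter Topology

private lemma strong_apply_tendsto {E F : Type*}
    [NormedAddCommGroup E] [NormedSpace ℂ E]
    [NormedAddCommGroup F] [NormedSpace ℂ F]
    (T : ℕ → E →L[ℂ] F) (S : E →L[ℂ] F) (C : ℝ)
    (hC : ∀ n, ‖T n‖ ≤ C)
    (hT : ∀ x : E, Tendsto (fun n => T n x) atTop (𝓝 (S x)))
    {xn : ℕ → E} {x : E} (hx : Tendsto xn atTop (𝓝 x)) :
    Tendsto (fun n => T n (xn n)) atTop (𝓝 (S x)) := by
  rw [tendsto_iff_norm_sub_tendsto_zero]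
  have h1 : Tendsto (fun n => ‖xn n - x‖) atTop (𝓝 0) :=
    tendsto_iff_norm_sub_tendsto_zero.1 hx
  have h2 : Tendsto (fun n => ‖T n x - S x‖) atTop (𝓝 0) :=
    tendsto_iff_norm_sub_tendsto_zero.1 (hT x)
  have h0 : Tendsto (fun n => C * ‖xn n - x‖ + ‖T n x - S x‖) atTop (𝓝 0) := by
    simpa using (h1.const_mul C).add h2
  refine squeeze_zero (fun n => norm_nonneg _) (fun n => ?_) h0
  have heq : T n (xn n) - S x = T n (xn n - x) + (T n x - S x) := by
    rw [map_sub]; abel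
  rw [heq]
  refine (norm_add_le _ _).trans (add_le_add_left ?_ _)
  calc ‖T n (xn n - x)‖ ≤ ‖T n‖ * ‖xn n - x‖ := (T n).le_opNorm _
    _ ≤ C * ‖xn n - x‖ := by
        exact mul_le_mul_of_nonneg_right (hC n) (norm_nonneg _)

/-- If `G_n → G` and `G_n* → G*` strongly on `Y`, then the optimal
values converge: `α‖ghat_n‖² + ‖G_n(v + L ghat_n)‖² → α‖ghat‖² + ‖G(v + L ghat)‖²`,
where `ghat_n = −(α·I + L*G_n*G_nL)⁻¹(L*G_n*G_n v)` and
`ghat = −(α·I + L*G*GL)⁻¹(L*G*G v)`. -/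
theorem stmt17
    {U Y : Type*}
    [NormedAddCommGroup U] [InnerProductSpace ℂ U] [CompleteSpace U]
    [NormedAddCommGroup Y] [InnerProductSpace ℂ Y] [CompleteSpace Y]
    (L : U →L[ℂ] Y) (α : ℝ) (hα : 0 < α) (v : Y)
    (G : Y →L[ℂ] Y) (Gn : ℕ → (Y →L[ℂ] Y))
    (hGn : ∀ y : Y, Tendsto (fun n => Gn n y) atTop (𝓝 (G y)))
    (hGnstar : ∀ y : Y, Tendsto
      (fun n => (ContinuousLinearMap.adjoint (Gn n)) y) atTop
      (𝓝 ((ContinuousLinearMap.adjoint G) y)))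
    (Λn : ℕ → (U →L[ℂ] U)) (ΛG : U →L[ℂ] U)
    (hΛn : ∀ n : ℕ, Λn n = (α : ℂ) • (1 : U →L[ℂ] U) +
      ((ContinuousLinearMap.adjoint L).comp
        ((ContinuousLinearMap.adjoint (Gn n)).comp ((Gn n).comp L))))
    (hΛG : ΛG = (α : ℂ) • (1 : U →L[ℂ] U) +
      ((ContinuousLinearMap.adjoint L).comp
        ((ContinuousLinearMap.adjoint G).comp (G.comp L))))
    (Λninv : ℕ → (U →L[ℂ] U)) (ΛGinv : U →L[ℂ] U)
    (hninv₁ : ∀ n : ℕ, (Λninv n).comp (Λn n) = 1)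
    (hninv₂ : ∀ n : ℕ, (Λn n).comp (Λninv n) = 1)
    (hGinv₁ : ΛGinv.comp ΛG = 1) (hGinv₂ : ΛG.comp ΛGinv = 1)
    (ghatn : ℕ → U) (ghat : U)
    (hghatn : ∀ n : ℕ, ghatn n = -(Λninv n) ((ContinuousLinearMap.adjoint L)
      ((ContinuousLinearMap.adjoint (Gn n)) ((Gn n) v))))
    (hghat : ghat = -ΛGinv ((ContinuousLinearMap.adjoint L)
      ((ContinuousLinearMap.adjoint G) (G v)))) :
    Tendsto (fun n => α * ‖ghatn n‖ ^ 2 + ‖(Gn n) (v + L (ghatn n))‖ ^ 2)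
      atTop (𝓝 (α * ‖ghat‖ ^ 2 + ‖G (v + L ghat)‖ ^ 2)) := by
  -- uniform bound on ‖Gn n‖
  obtain ⟨C, hC⟩ : ∃ C, ∀ n, ‖Gn n‖ ≤ C := by
    apply banach_steinhaus
    intro y
    obtain ⟨C, hC⟩ := ((hGn y).norm.bddAbove_range)
    exact ⟨C, fun n => hC ⟨n, rfl⟩⟩
  have hCstar : ∀ n, ‖ContinuousLinearMap.adjoint (Gn n)‖ ≤ C := by
    intro n
    rw [LinearIsometryEquiv.norm_map]
    exact hC n
  -- strong convergence of Gn* Gn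
  have hGG : ∀ y : Y, Tendsto (fun n =>
      (ContinuousLinearMap.adjoint (Gn n)) ((Gn n) y)) atTop
      (𝓝 ((ContinuousLinearMap.adjoint G) (G y))) := by
    intro y
    exact strong_apply_tendsto (fun n => ContinuousLinearMap.adjoint (Gn n))
      (ContinuousLinearMap.adjoint G) C hCstar hGnstar (hGn y)
  -- strong convergence of Λn
  have hΛstrong : ∀ u : U, Tendsto (fun n => (Λn n) u) atTop (𝓝 (ΛG u)) := by
    intro u
    simp only [hΛn, hΛG, add_apply, smul_apply, one_apply, comp_apply]
    exact tendsto_const_nhds.add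
      ((((ContinuousLinearMap.adjoint L)).continuous.tendsto _).comp (hGG (L u)))
  -- bound on inverses: ‖Λninv n x‖ ≤ ‖x‖ / α
  have hinvbound : ∀ (n : ℕ) (x : U), ‖(Λninv n) x‖ ≤ ‖x‖ / α := by
    intro n x
    set g := (Λninv n) x with hg
    have hx : (Λn n) g = x := by
      have := congrArg (fun T : U →L[ℂ] U => T x) (hninv₂ n)
      simpa using this
    have hcoer : α * ‖g‖ ^ 2 ≤ ‖x‖ * ‖g‖ := by
      have hinner : ((inner ℂ ((Λn n) g) g : ℂ)).re
          = α * ‖g‖ ^ 2 + ‖(Gn n) (L g)‖ ^ 2 := by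
        rw [hΛn]
        simp only [add_apply, smul_apply, ContinuousLinearMap.one_apply, comp_apply]
        rw [inner_add_left, inner_smul_left]
        rw [ContinuousLinearMap.adjoint_inner_left,
          ContinuousLinearMap.adjoint_inner_left]
        rw [inner_self_eq_norm_sq_to_K, inner_self_eq_norm_sq_to_K,
          Complex.conj_ofReal]
        simp [← Complex.ofReal_pow, ← Complex.ofReal_mul, ← Complex.ofReal_add]
      have h1 : α * ‖g‖ ^ 2 ≤ ((inner ℂ ((Λn n) g) g : ℂ)).re := by
        rw [hinner]
        nlinarith [sq_nonneg ‖(Gn n) (L g)‖]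
      have h2 : ((inner ℂ ((Λn n) g) g : ℂ)).re ≤ ‖x‖ * ‖g‖ := by
        calc ((inner ℂ ((Λn n) g) g : ℂ)).re ≤ ‖(inner ℂ ((Λn n) g) g : ℂ)‖ :=
              Complex.re_le_norm _
          _ ≤ ‖(Λn n) g‖ * ‖g‖ := norm_inner_le_norm _ _
          _ = ‖x‖ * ‖g‖ := by rw [hx]
      linarith
    rcases eq_or_ne g 0 with h0 | h0
    · rw [h0]; simp; positivity
    · have hgpos : 0 < ‖g‖ := norm_pos_iff.2 h0
      rw [le_div_iff₀ hα]
      nlinarith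
  -- convergence of ghatn to ghat
  set wn : ℕ → U := fun n => (ContinuousLinearMap.adjoint L)
    ((ContinuousLinearMap.adjoint (Gn n)) ((Gn n) v)) with hwn
  set w : U := (ContinuousLinearMap.adjoint L)
    ((ContinuousLinearMap.adjoint G) (G v)) with hw
  have hwconv : Tendsto wn atTop (𝓝 w) :=
    (((ContinuousLinearMap.adjoint L)).continuous.tendsto _).comp (hGG v)
  have hinvconv : Tendsto (fun n => (Λninv n) (wn n)) atTop (𝓝 (ΛGinv w)) := by
    rw [tendsto_iff_norm_sub_tendsto_zero]
    have key : ∀ n, (Λninv n) (wn n) - ΛGinv w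
        = (Λninv n) (wn n - w) + (Λninv n) ((ΛG - Λn n) (ΛGinv w)) := by
      intro n
      have e1 : (Λninv n) ((Λn n) (ΛGinv w)) = ΛGinv w := by
        have := congrArg (fun T : U →L[ℂ] U => T (ΛGinv w)) (hninv₁ n)
        simpa using this
      have e2 : ΛG (ΛGinv w) = w := by
        have := congrArg (fun T : U →L[ℂ] U => T w) (hGinv₂)
        simpa using this
      simp only [map_sub, sub_apply, e2]
      rw [e1]
      abel
    have hb : ∀ n, ‖(Λninv n) (wn n) - ΛGinv w‖
        ≤ ‖wn n - w‖ / α + ‖(ΛG - Λn n) (ΛGinv w)‖ / α := by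
      intro n
      rw [key n]
      exact (norm_add_le _ _).trans
        (add_le_add (hinvbound n _) (hinvbound n _))
    have h0 : Tendsto (fun n => ‖wn n - w‖ / α + ‖(ΛG - Λn n) (ΛGinv w)‖ / α)
        atTop (𝓝 0) := by
      have h1 : Tendsto (fun n => ‖wn n - w‖) atTop (𝓝 0) :=
        tendsto_iff_norm_sub_tendsto_zero.1 hwconv
      have h2 : Tendsto (fun n => ‖(ΛG - Λn n) (ΛGinv w)‖) atTop (𝓝 0) := by
        have := tendsto_iff_norm_sub_tendsto_zero.1 (hΛstrong (ΛGinv w))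
        simp only [sub_apply]
        refine this.congr (fun n => ?_)
        rw [← norm_neg]; congr 1; abel
      simpa using (h1.div_const α).add (h2.div_const α)
    exact squeeze_zero (fun n => norm_nonneg _) hb h0
  have hgconv : Tendsto ghatn atTop (𝓝 ghat) := by
    rw [show ghatn = fun n => -(Λninv n) (wn n) from funext hghatn, hghat]
    exact hinvconv.neg
  -- conclude
  have hnorm1 : Tendsto (fun n => α * ‖ghatn n‖ ^ 2) atTop (𝓝 (α * ‖ghat‖ ^ 2)) :=
    ((hgconv.norm.pow 2)).const_mul α
  have harg : Tendsto (fun n => v + L (ghatn n)) atTop (𝓝 (v + L ghat)) :=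
    tendsto_const_nhds.add ((L.continuous.tendsto _).comp hgconv)
  have hnorm2 : Tendsto (fun n => ‖(Gn n) (v + L (ghatn n))‖ ^ 2) atTop
      (𝓝 (‖G (v + L ghat)‖ ^ 2)) :=
    ((strong_apply_tendsto Gn G C hC hGn harg).norm.pow 2)
  exact hnorm1.add hnorm2
end
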